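/- Every zonotope Z ⊆ R^n satisfies Z + V(Z) = 2Z, i.e., every zonotope is vertex generated. -/

import Mathlib

open Set Pointwise Metric

set_option maxHeartbeats 1000000

/-- A polytope is the convex hull of finitely many points. -/
def IsPolytope {n : ℕ} (P : Set (EuclideanSpace ℝ (Fin n))) : Prop :=
  ∃ S : Finset (EuclideanSpace ℝ (Fin n)), P = convexHull ℝ (S : Set (EuclideanSpace ℝ (Fin n)))

/-- A zonotope is a Minkowski sum of finitely many segments. -/
def IsZonotope {n : ℕ} (Z : Set (EuclideanSpace ℝ (Fin n))) : Prop :=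
  ∃ (m : ℕ) (a b : Fin m → EuclideanSpace ℝ (Fin n)),
    Z = ∑ i, segment ℝ (a i) (b i)

namespace ZonoProof

variable {n : ℕ}

noncomputable section

/-- The zonotope generated by segments `[a i, b i]`. -/
def zsum {m : ℕ} (a b : Fin m → (EuclideanSpace ℝ (Fin n))) : Set (EuclideanSpace ℝ (Fin n)) := ∑ i, segment ℝ (a i) (b i)

lemma mem_zsum_iff {m : ℕ} {a b : Fin m → (EuclideanSpace ℝ (Fin n))} {x : (EuclideanSpace ℝ (Fin n))} :
    x ∈ zsum a b ↔ ∃ f : Fin m → (EuclideanSpace ℝ (Fin n)), (∀ i, f i ∈ segment ℝ (a i) (b i)) ∧ ∑ i, f i = x := by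
  rw [zsum, Set.mem_fintype_sum]
  constructor
  · rintro ⟨g, hg, h⟩; exact ⟨g, hg, h⟩
  · rintro ⟨g, hg, h⟩; exact ⟨g, hg, h⟩

lemma sum_mem_zsum {m : ℕ} {a b f : Fin m → (EuclideanSpace ℝ (Fin n))}
    (hf : ∀ i, f i ∈ segment ℝ (a i) (b i)) : ∑ i, f i ∈ zsum a b :=
  mem_zsum_iff.2 ⟨f, hf, rfl⟩

lemma mem_segment_param {x y z : (EuclideanSpace ℝ (Fin n))} :
    z ∈ segment ℝ x y ↔ ∃ t : ℝ, t ∈ Icc (0:ℝ) 1 ∧ z = x + t • (y - x) := by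
  rw [segment_eq_image']
  constructor
  · rintro ⟨t, ht, rfl⟩; exact ⟨t, ht, rfl⟩
  · rintro ⟨t, ht, rfl⟩; exact ⟨t, ht, rfl⟩

lemma convex_zsum {m : ℕ} (a b : Fin m → (EuclideanSpace ℝ (Fin n))) : Convex ℝ (zsum a b) := by
  refine Finset.sum_induction _ (Convex ℝ) (fun s t hs ht => hs.add ht) ?_ ?_
  · rw [show (0 : Set (EuclideanSpace ℝ (Fin n))) = {0} from rfl]
    exact convex_singleton 0
  · exact fun i _ => convex_segment _ _

lemma isCompact_seg (x y : (EuclideanSpace ℝ (Fin n))) : IsCompact (segment ℝ x y) := by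
  rw [segment_eq_image']
  exact isCompact_Icc.image (by fun_prop)

lemma isCompact_zsum {m : ℕ} (a b : Fin m → (EuclideanSpace ℝ (Fin n))) : IsCompact (zsum a b) := by
  refine Finset.sum_induction _ IsCompact (fun s t hs ht => hs.add ht) ?_ ?_
  · rw [show (0 : Set (EuclideanSpace ℝ (Fin n))) = {0} from rfl]
    exact isCompact_singleton
  · exact fun i _ => isCompact_seg _ _

/-- The center of the zonotope. -/
def zcenter {m : ℕ} (a b : Fin m → (EuclideanSpace ℝ (Fin n))) : (EuclideanSpace ℝ (Fin n)) := ∑ i, ((2:ℝ)⁻¹ • (a i + b i))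

lemma zcenter_mem {m : ℕ} (a b : Fin m → (EuclideanSpace ℝ (Fin n))) : zcenter a b ∈ zsum a b := by
  refine sum_mem_zsum (f := fun i => (2:ℝ)⁻¹ • (a i + b i)) (fun i => ?_)
  refine mem_segment_param.2 ⟨(2:ℝ)⁻¹, ⟨by norm_num, by norm_num⟩, ?_⟩
  module

lemma zcenter_add_half_mem {m : ℕ} (a b : Fin m → (EuclideanSpace ℝ (Fin n))) (j : Fin m) (s : ℝ)
    (hs : s = (2:ℝ)⁻¹ ∨ s = -(2:ℝ)⁻¹) :
    zcenter a b + s • (b j - a j) ∈ zsum a b := by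
  classical
  have hsum : zcenter a b + s • (b j - a j)
      = ∑ i, ((2:ℝ)⁻¹ • (a i + b i) + (if i = j then s • (b j - a j) else 0)) := by
    rw [Finset.sum_add_distrib, Finset.sum_ite_eq' Finset.univ j (fun _ => s • (b j - a j))]
    simp [zcenter]
  rw [hsum]
  refine sum_mem_zsum fun i => ?_
  by_cases hij : i = j
  · subst hij
    refine mem_segment_param.2 ⟨(2:ℝ)⁻¹ + s, ⟨?_, ?_⟩, ?_⟩
    · rcases hs with rfl | rfl <;> norm_num
    · rcases hs with rfl | rfl <;> norm_num
    · rw [if_pos rfl]; module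
  · refine mem_segment_param.2 ⟨(2:ℝ)⁻¹, ⟨by norm_num, by norm_num⟩, ?_⟩
    simp only [if_neg hij, add_zero]; module

lemma zsym {m : ℕ} {a b : Fin m → (EuclideanSpace ℝ (Fin n))} {x : (EuclideanSpace ℝ (Fin n))} (hx : x ∈ zsum a b) :
    (2:ℝ) • zcenter a b - x ∈ zsum a b := by
  obtain ⟨f, hf, rfl⟩ := mem_zsum_iff.1 hx
  have : (2:ℝ) • zcenter a b - ∑ i, f i = ∑ i, ((a i + b i) - f i) := by
    rw [zcenter, Finset.smul_sum, ← Finset.sum_sub_distrib]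
    congr 1; funext i; module
  rw [this]
  refine sum_mem_zsum fun i => ?_
  obtain ⟨t, ⟨ht0, ht1⟩, hft⟩ := mem_segment_param.1 (hf i)
  refine mem_segment_param.2 ⟨1 - t, ⟨by linarith, by linarith⟩, ?_⟩
  rw [hft]; module

lemma sub_zcenter_mem {m : ℕ} {a b : Fin m → (EuclideanSpace ℝ (Fin n))} {V : Submodule ℝ (EuclideanSpace ℝ (Fin n))}
    (hd : ∀ i, b i - a i ∈ V) {x : (EuclideanSpace ℝ (Fin n))} (hx : x ∈ zsum a b) :
    x - zcenter a b ∈ V := by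
  obtain ⟨f, hf, rfl⟩ := mem_zsum_iff.1 hx
  have : ∑ i, f i - zcenter a b = ∑ i, (f i - (2:ℝ)⁻¹ • (a i + b i)) := by
    rw [zcenter, ← Finset.sum_sub_distrib]
  rw [this]
  refine Submodule.sum_mem _ fun i _ => ?_
  obtain ⟨t, _, hft⟩ := mem_segment_param.1 (hf i)
  have : f i - (2:ℝ)⁻¹ • (a i + b i) = (t - (2:ℝ)⁻¹) • (b i - a i) := by rw [hft]; module
  rw [this]
  exact Submodule.smul_mem _ _ (hd i)

section Face

open scoped Classical

variable {m : ℕ} (g : EuclideanSpace ℝ (Fin n) →L[ℝ] ℝ) (a b : Fin m → (EuclideanSpace ℝ (Fin n)))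

/-- Endpoints of the face segments in direction `g`. -/
def fA : Fin m → (EuclideanSpace ℝ (Fin n)) := fun i => if 0 < g (b i - a i) then b i else a i

def fB : Fin m → (EuclideanSpace ℝ (Fin n)) := fun i => if g (b i - a i) < 0 then a i else b i

lemma g_fA (i : Fin m) : g (fA g a b i) = max (g (a i)) (g (b i))
    ∧ g (fB g a b i) = max (g (a i)) (g (b i)) := by
  have hba : g (b i) = g (a i) + g (b i - a i) := by rw [map_sub]; ring
  rcases lt_trichotomy (g (b i - a i)) 0 with h | h | h
  · have h1 : ¬ (0 < g (b i - a i)) := by linarith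
    simp only [fA, fB, if_pos h, if_neg h1]
    constructor <;> (rw [max_eq_left (by linarith)])
  · have h1 : ¬ (0 < g (b i - a i)) := by simp [h]
    have h2 : ¬ (g (b i - a i) < 0) := by simp [h]
    simp only [fA, fB, if_neg h1, if_neg h2]
    constructor <;> rw [max_eq_right (by linarith)] <;> linarith
  · have h2 : ¬ (g (b i - a i) < 0) := by linarith
    simp only [fA, fB, if_pos h, if_neg h2]
    constructor <;> rw [max_eq_right (by linarith)]

lemma fsub_ker (i : Fin m) : g (fB g a b i - fA g a b i) = 0 := by
  have h := g_fA g a b i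
  rw [map_sub, h.1, h.2, sub_self]

lemma fsub_mem {V : Submodule ℝ (EuclideanSpace ℝ (Fin n))} (hd : ∀ i, b i - a i ∈ V) (i : Fin m) :
    fB g a b i - fA g a b i ∈ V := by
  unfold fA fB
  split_ifs with h1 h2 h3
  · linarith
  · simpa using Submodule.zero_mem V
  · simpa using Submodule.zero_mem V
  · exact hd i

lemma seg_le {i : Fin m} {x : EuclideanSpace ℝ (Fin n)} (hx : x ∈ segment ℝ (a i) (b i)) :
    g x ≤ max (g (a i)) (g (b i)) := by
  obtain ⟨t, ⟨ht0, ht1⟩, rfl⟩ := mem_segment_param.1 hx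
  rw [map_add, map_smul, smul_eq_mul]
  have hba : g (b i) = g (a i) + g (b i - a i) := by rw [map_sub]; ring
  rcases le_or_gt (g (b i - a i)) 0 with h | h
  · have : t * g (b i - a i) ≤ 0 := mul_nonpos_of_nonneg_of_nonpos ht0 h
    exact le_max_of_le_left (by linarith)
  · have : t * g (b i - a i) ≤ g (b i - a i) := by nlinarith
    exact le_max_of_le_right (by linarith)

lemma seg_eq_mem {i : Fin m} {x : EuclideanSpace ℝ (Fin n)} (hx : x ∈ segment ℝ (a i) (b i))
    (hmax : g x = max (g (a i)) (g (b i))) : x ∈ segment ℝ (fA g a b i) (fB g a b i) := by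
  obtain ⟨t, ⟨ht0, ht1⟩, rfl⟩ := mem_segment_param.1 hx
  have hgx : g (a i) + t * g (b i - a i) = max (g (a i)) (g (b i)) := by
    rw [← hmax, map_add, map_smul, smul_eq_mul]
  have hba : g (b i) = g (a i) + g (b i - a i) := by rw [map_sub]; ring
  rcases lt_trichotomy (g (b i - a i)) 0 with h | h | h
  · have h1 : ¬ (0 < g (b i - a i)) := by linarith
    have hmx : max (g (a i)) (g (b i)) = g (a i) := max_eq_left (by linarith)
    have ht : t = 0 := by
      rcases eq_or_lt_of_le ht0 with h'|h'
      · exact h'.symm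
      · nlinarith
    simp only [fA, fB, if_pos h, if_neg h1, ht, zero_smul, add_zero]
    exact left_mem_segment _ _ _
  · simp only [fA, fB, lt_asymm, lt_irrefl, if_neg (by simp [h] : ¬ (0 < g (b i - a i))),
      if_neg (by simp [h] : ¬ (g (b i - a i) < 0))]
    exact mem_segment_param.2 ⟨t, ⟨ht0, ht1⟩, rfl⟩
  · have h2 : ¬ (g (b i - a i) < 0) := by linarith
    have hmx : max (g (a i)) (g (b i)) = g (b i) := max_eq_right (by linarith)
    have ht : t = 1 := by nlinarith
    simp only [fA, fB, if_pos h, if_neg h2, ht, one_smul]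
    have : a i + (b i - a i) = b i := by module
    rw [this]
    exact left_mem_segment _ _ _

lemma face_seg_subset (i : Fin m) :
    segment ℝ (fA g a b i) (fB g a b i) ⊆ segment ℝ (a i) (b i) := by
  refine (convex_segment (a i) (b i)).segment_subset ?_ ?_
  · unfold fA; split_ifs
    · exact right_mem_segment _ _ _
    · exact left_mem_segment _ _ _
  · unfold fB; split_ifs
    · exact left_mem_segment _ _ _
    · exact right_mem_segment _ _ _

lemma face_seg_const {i : Fin m} {x : EuclideanSpace ℝ (Fin n)}
    (hx : x ∈ segment ℝ (fA g a b i) (fB g a b i)) :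
    g x = max (g (a i)) (g (b i)) := by
  obtain ⟨t, _, rfl⟩ := mem_segment_param.1 hx
  rw [map_add, map_smul, smul_eq_mul, fsub_ker, mul_zero, add_zero, (g_fA g a b i).1]

lemma face_eq :
    zsum (fA g a b) (fB g a b) = {x ∈ zsum a b | ∀ y ∈ zsum a b, g y ≤ g x} := by
  ext x
  constructor
  · intro hx
    obtain ⟨f, hf, rfl⟩ := mem_zsum_iff.1 hx
    have hmem : ∑ i, f i ∈ zsum a b := sum_mem_zsum fun i => face_seg_subset g a b i (hf i)
    refine ⟨hmem, fun y hy => ?_⟩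
    obtain ⟨fy, hfy, rfl⟩ := mem_zsum_iff.1 hy
    rw [map_sum, map_sum]
    refine Finset.sum_le_sum fun i _ => ?_
    rw [face_seg_const g a b (hf i)]
    exact seg_le g a b (hfy i)
  · rintro ⟨hx, hmax⟩
    obtain ⟨f, hf, rfl⟩ := mem_zsum_iff.1 hx
    have hq : ∑ i, fA g a b i ∈ zsum a b :=
      sum_mem_zsum fun i => face_seg_subset g a b i (left_mem_segment ℝ _ _)
    have hqv : g (∑ i, fA g a b i) = ∑ i, max (g (a i)) (g (b i)) := by
      rw [map_sum]; exact Finset.sum_congr rfl fun i _ => (g_fA g a b i).1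
    have hle : ∀ i ∈ Finset.univ, g (f i) ≤ max (g (a i)) (g (b i)) :=
      fun i _ => seg_le g a b (hf i)
    have hsum : ∑ i, g (f i) = ∑ i, max (g (a i)) (g (b i)) := by
      refine le_antisymm (Finset.sum_le_sum hle) ?_
      have := hmax _ hq
      rw [hqv, map_sum] at this
      exact this
    have heach := (Finset.sum_eq_sum_iff_of_le hle).1 hsum
    exact sum_mem_zsum fun i => seg_eq_mem g a b (hf i) (heach i (Finset.mem_univ i))

end Face

lemma krein {m : ℕ} (a b : Fin m → (EuclideanSpace ℝ (Fin n))) :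
    ((zsum a b).extremePoints ℝ).Nonempty :=
  (isCompact_zsum a b).extremePoints_nonempty ⟨zcenter a b, zcenter_mem a b⟩

lemma center_case {m : ℕ} {a b : Fin m → (EuclideanSpace ℝ (Fin n))} {z : EuclideanSpace ℝ (Fin n)}
    (hz : z = zcenter a b) :
    ∃ v ∈ (zsum a b).extremePoints ℝ, (2:ℝ) • z - v ∈ zsum a b := by
  obtain ⟨v, hv⟩ := krein a b
  exact ⟨v, hv, by rw [hz]; exact zsym (extremePoints_subset hv)⟩

lemma key (k : ℕ) : ∀ (V : Submodule ℝ (EuclideanSpace ℝ (Fin n))),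
    Module.finrank ℝ V ≤ k → ∀ (m : ℕ) (a b : Fin m → EuclideanSpace ℝ (Fin n)),
    (∀ i, b i - a i ∈ V) → ∀ z ∈ zsum a b,
    ∃ v ∈ (zsum a b).extremePoints ℝ, (2:ℝ) • z - v ∈ zsum a b := by
  induction k with
  | zero =>
    intro V hV m a b hd z hz
    have hVbot : V = ⊥ := Submodule.finrank_eq_zero.1 (Nat.le_zero.1 hV)
    refine center_case ?_
    have := sub_zcenter_mem hd hz
    rw [hVbot, Submodule.mem_bot, sub_eq_zero] at this
    exact this
  | succ k ih =>
    intro V hV m a b hd z hz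
    by_cases hzc : z = zcenter a b
    · exact center_case hzc
    by_cases hspan : Submodule.span ℝ (Set.range fun i => b i - a i) = V
    swap
    · -- span is a proper submodule of V, recurse
      have hle : Submodule.span ℝ (Set.range fun i => b i - a i) ≤ V :=
        Submodule.span_le.2 (by rintro x ⟨i, rfl⟩; exact hd i)
      have hlt := Submodule.finrank_lt_finrank_of_lt (lt_of_le_of_ne hle hspan)
      refine ih _ (by omega) m a b (fun i => Submodule.subset_span (Set.mem_range_self i)) z hz
    -- main case
    set c := zcenter a b with hc
    have hzcV : z - c ∈ V := sub_zcenter_mem hd hz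
    have hdz : z - c ≠ 0 := sub_ne_zero.2 hzc
    -- the maximal dilation along the ray from c through z
    set S : Set ℝ := {l : ℝ | 0 ≤ l ∧ c + l • (z - c) ∈ zsum a b} with hSdef
    have hS1 : (1:ℝ) ∈ S := by
      refine ⟨zero_le_one, ?_⟩
      have h1 : c + (1:ℝ) • (z - c) = z := by module
      rw [h1]; exact hz
    have hSclosed : IsClosed S := by
      have : S = Ici (0:ℝ) ∩ (fun l : ℝ => c + l • (z - c)) ⁻¹' (zsum a b) := by
        ext l; simp [hSdef, mem_Ici]
      rw [this]
      exact isClosed_Ici.inter (((isCompact_zsum a b).isClosed).preimage (by fun_prop))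
    have hSbdd : ∃ u : ℝ, ∀ l ∈ S, l ≤ u := by
      obtain ⟨R, hR⟩ := ((isCompact_zsum a b).isBounded).subset_closedBall c
      refine ⟨R / ‖z - c‖, fun l hl => ?_⟩
      have h1 : dist (c + l • (z - c)) c ≤ R := hR hl.2
      rw [dist_eq_norm, add_sub_cancel_left, norm_smul, Real.norm_eq_abs,
        abs_of_nonneg hl.1] at h1
      rw [le_div_iff₀ (norm_pos_iff.2 hdz)]
      exact h1
    obtain ⟨u, hu⟩ := hSbdd
    have hScpt : IsCompact S := by
      refine IsCompact.of_isClosed_subset (isCompact_Icc (a := (0:ℝ)) (b := u)) hSclosed ?_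
      exact fun l hl => ⟨hl.1, hu l hl⟩
    obtain ⟨l0, hl0S, hl0max⟩ := hScpt.exists_isGreatest ⟨1, hS1⟩
    obtain ⟨hl0nn, hp⟩ := hl0S
    have hl01 : 1 ≤ l0 := hl0max hS1
    have hl0pos : (0:ℝ) < l0 := lt_of_lt_of_le one_pos hl01
    set p := c + l0 • (z - c) with hpdef
    -- work inside the subspace V
    set K : Set ↥V := {w : ↥V | c + (w : EuclideanSpace ℝ (Fin n)) ∈ zsum a b} with hKdef
    have hKconv : Convex ℝ K := by
      intro w1 h1 w2 h2 s t hs ht hst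
      show c + ((s • w1 + t • w2 : ↥V) : EuclideanSpace ℝ (Fin n)) ∈ zsum a b
      have he : c + ((s • w1 + t • w2 : ↥V) : EuclideanSpace ℝ (Fin n))
          = s • (c + (w1 : EuclideanSpace ℝ (Fin n))) + t • (c + (w2 : EuclideanSpace ℝ (Fin n))) := by
        push_cast
        rw [show s • (c + (w1:EuclideanSpace ℝ (Fin n))) + t • (c + (w2:EuclideanSpace ℝ (Fin n)))
            = (s + t) • c + (s • (w1:EuclideanSpace ℝ (Fin n)) + t • (w2:EuclideanSpace ℝ (Fin n)))
            from by module, hst, one_smul]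
      rw [he]
      exact convex_zsum a b h1 h2 hs ht hst
    have hpcV : p - c ∈ V := by
      rw [hpdef, add_sub_cancel_left]
      exact Submodule.smul_mem _ _ hzcV
    set pV : ↥V := ⟨p - c, hpcV⟩ with hpV
    set zV : ↥V := ⟨z - c, hzcV⟩ with hzV
    have h0K : (0 : ↥V) ∈ K := by
      show c + ((0 : ↥V) : EuclideanSpace ℝ (Fin n)) ∈ zsum a b
      simpa using zcenter_mem a b
    -- the affine span of K is everything
    have hspanV : Submodule.span ℝ (Set.range fun i => (⟨b i - a i, hd i⟩ : ↥V)) = ⊤ := by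
      apply Submodule.map_injective_of_injective V.injective_subtype
      have himg : V.subtype '' (Set.range fun i => (⟨b i - a i, hd i⟩ : ↥V))
          = Set.range (fun i => b i - a i) := by
        rw [← Set.range_comp]; rfl
      rw [Submodule.map_span, himg, hspan, Submodule.map_subtype_top]
    have hdirs : ∀ i, (⟨b i - a i, hd i⟩ : ↥V) ∈ vectorSpan ℝ K := by
      intro i
      have m1 : ((2:ℝ)⁻¹ • (⟨b i - a i, hd i⟩ : ↥V)) ∈ K := by
        show c + (((2:ℝ)⁻¹ • (⟨b i - a i, hd i⟩ : ↥V) : ↥V) : EuclideanSpace ℝ (Fin n)) ∈ zsum a b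
        push_cast
        exact zcenter_add_half_mem a b i _ (Or.inl rfl)
      have m2 : ((-(2:ℝ)⁻¹) • (⟨b i - a i, hd i⟩ : ↥V)) ∈ K := by
        show c + (((-(2:ℝ)⁻¹) • (⟨b i - a i, hd i⟩ : ↥V) : ↥V) : EuclideanSpace ℝ (Fin n)) ∈ zsum a b
        push_cast
        exact zcenter_add_half_mem a b i _ (Or.inr rfl)
      have hv := vsub_mem_vectorSpan ℝ m1 m2
      have he : ((2:ℝ)⁻¹ • (⟨b i - a i, hd i⟩ : ↥V)) -ᵥ ((-(2:ℝ)⁻¹) • (⟨b i - a i, hd i⟩ : ↥V))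
          = (⟨b i - a i, hd i⟩ : ↥V) := by
        rw [vsub_eq_sub]
        apply Subtype.ext
        push_cast
        module
      rw [he] at hv
      exact hv
    have hKaff : affineSpan ℝ K = ⊤ := by
      rw [AffineSubspace.affineSpan_eq_top_iff_vectorSpan_eq_top_of_nonempty ℝ ↥V ↥V ⟨0, h0K⟩]
      rw [eq_top_iff, ← hspanV]
      exact Submodule.span_le.2 (by rintro x ⟨i, rfl⟩; exact hdirs i)
    have hKint : (interior K).Nonempty := hKconv.interior_nonempty_iff_affineSpan_eq_top.2 hKaff
    have hpK : pV ∈ K := by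
      show c + (p - c) ∈ zsum a b
      rwa [add_sub_cancel]
    have hpnot : pV ∉ interior K := by
      intro hmem
      rw [mem_interior_iff_mem_nhds, Metric.mem_nhds_iff] at hmem
      obtain ⟨ε, hε, hball⟩ := hmem
      have hzV0 : zV ≠ 0 := by
        intro h0
        exact hdz (by simpa [hzV, Submodule.mk_eq_zero] using h0)
      have hnz : (0:ℝ) < ‖zV‖ := norm_pos_iff.2 hzV0
      set δ : ℝ := ε / (2 * ‖zV‖) with hδ
      have hδ0 : 0 < δ := by positivity
      have hmemball : pV + δ • zV ∈ ball pV ε := by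
        rw [mem_ball_iff_norm, add_sub_cancel_left, norm_smul, Real.norm_eq_abs,
          abs_of_pos hδ0]
        have hne' : ‖z - c‖ ≠ 0 := norm_ne_zero_iff.2 hdz
        have hcoe : ‖zV‖ = ‖z - c‖ := rfl
        have hhalf : δ * ‖zV‖ = ε / 2 := by
          rw [hδ, hcoe]
          field_simp
        linarith
      have hK2 := hball hmemball
      have : c + ((pV + δ • zV : ↥V) : EuclideanSpace ℝ (Fin n)) ∈ zsum a b := hK2
      have heq : c + ((pV + δ • zV : ↥V) : EuclideanSpace ℝ (Fin n))
          = c + (l0 + δ) • (z - c) := by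
        push_cast
        show c + ((p - c) + δ • (z - c)) = c + (l0 + δ) • (z - c)
        rw [hpdef]
        module
      rw [heq] at this
      have hmemS : l0 + δ ∈ S := ⟨by linarith, this⟩
      have := hl0max hmemS
      linarith
    obtain ⟨f, hf⟩ := geometric_hahn_banach_open_point hKconv.interior isOpen_interior hpnot
    obtain ⟨w0, hw0⟩ := hKint
    have hfle : ∀ w ∈ K, f w ≤ f pV := by
      intro w hw
      by_contra hlt
      push_neg at hlt
      set A : ℝ := f w - f pV with hA
      have hA0 : 0 < A := by simp [hA]; linarith
      set B : ℝ := |f w0 - f w| with hB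
      have hB0 : (0:ℝ) ≤ B := abs_nonneg _
      set t : ℝ := min (1/2 : ℝ) (A / (2 * (B + 1))) with ht
      have ht0 : 0 < t := lt_min (by norm_num) (by positivity)
      have ht2 : t ≤ A / (2 * (B + 1)) := min_le_right _ _
      have htB : t * (B + 1) ≤ A / 2 := by
        have h1 := mul_le_mul_of_nonneg_right ht2 (by linarith : (0:ℝ) ≤ B + 1)
        have h2 : A / (2 * (B + 1)) * (B + 1) = A / 2 := by
          field_simp
        linarith
      have hco : (1 - t) • w + t • w0 ∈ interior K :=
        hKconv.combo_self_interior_mem_interior hw hw0 (by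
          have := min_le_left (1/2 : ℝ) (A / (2 * (B + 1))); rw [← ht] at this; linarith)
          ht0 (by ring)
      have hlt2 := hf _ hco
      rw [map_add, map_smul, map_smul, smul_eq_mul, smul_eq_mul] at hlt2
      have habs : f w0 - f w ≥ -B := neg_abs_le _
      nlinarith
    -- extend the functional to the ambient space
    set g : EuclideanSpace ℝ (Fin n) →L[ℝ] ℝ := f.comp (V.orthogonalProjectionOnto) with hgdef
    have hg : ∀ w : ↥V, g ((w : EuclideanSpace ℝ (Fin n))) = f w := by
      intro w
      simp [hgdef, Submodule.orthogonalProjectionOnto_mem_subspace_eq_self]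
    have hgmax : ∀ y ∈ zsum a b, g y ≤ g p := by
      intro y hy
      have hyV : y - c ∈ V := sub_zcenter_mem hd hy
      have hyK : (⟨y - c, hyV⟩ : ↥V) ∈ K := by
        show c + (y - c) ∈ zsum a b
        rwa [add_sub_cancel]
      have hle := hfle _ hyK
      have h1 : g p - g y = g (p - y) := by rw [map_sub]
      have h2 : p - y = ((pV - ⟨y - c, hyV⟩ : ↥V) : EuclideanSpace ℝ (Fin n)) := by
        push_cast
        show p - y = (p - c) - (y - c)
        abel
      have h3 : g (p - y) = f pV - f ⟨y - c, hyV⟩ := by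
        rw [h2, hg, map_sub]
      linarith
    have hnc : ∃ i, g (b i - a i) ≠ 0 := by
      by_contra hall
      push_neg at hall
      have hker : V ≤ LinearMap.ker (g : EuclideanSpace ℝ (Fin n) →ₗ[ℝ] ℝ) := by
        rw [← hspan]
        refine Submodule.span_le.2 ?_
        rintro x ⟨i, rfl⟩
        exact hall i
      have hw0K : w0 ∈ K := interior_subset hw0
      have hlt := hf w0 hw0
      have h2 : ((pV - w0 : ↥V) : EuclideanSpace ℝ (Fin n)) ∈ LinearMap.ker (g : EuclideanSpace ℝ (Fin n) →ₗ[ℝ] ℝ) :=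
        hker (pV - w0).2
      rw [LinearMap.mem_ker, ContinuousLinearMap.coe_coe] at h2
      rw [hg, map_sub] at h2
      linarith
    obtain ⟨i0, hi0⟩ := hnc
    -- the proper face
    have hVlt : V ⊓ LinearMap.ker (g : EuclideanSpace ℝ (Fin n) →ₗ[ℝ] ℝ) < V := by
      refine lt_of_le_of_ne inf_le_left (fun hEq => hi0 ?_)
      have : b i0 - a i0 ∈ V ⊓ LinearMap.ker (g : EuclideanSpace ℝ (Fin n) →ₗ[ℝ] ℝ) := by rw [hEq]; exact hd i0
      exact (Submodule.mem_inf.1 this).2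
    have hrk : Module.finrank ℝ ↥(V ⊓ LinearMap.ker (g : EuclideanSpace ℝ (Fin n) →ₗ[ℝ] ℝ)) ≤ k := by
      have := Submodule.finrank_lt_finrank_of_lt hVlt
      omega
    have hpF : p ∈ zsum (fA g a b) (fB g a b) := by
      rw [face_eq]
      exact ⟨hp, hgmax⟩
    obtain ⟨v, hvF, hvrec⟩ := ih (V ⊓ LinearMap.ker (g : EuclideanSpace ℝ (Fin n) →ₗ[ℝ] ℝ)) hrk m (fA g a b) (fB g a b)
      (fun i => Submodule.mem_inf.2 ⟨fsub_mem g a b hd i, LinearMap.mem_ker.2 (fsub_ker g a b i)⟩)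
      p hpF
    have hFsub : zsum (fA g a b) (fB g a b) ⊆ zsum a b := by
      rw [face_eq]
      exact fun x hx => hx.1
    have hexp : IsExposed ℝ (zsum a b) (zsum (fA g a b) (fB g a b)) := fun _ => ⟨g, face_eq g a b⟩
    have hvZ : v ∈ (zsum a b).extremePoints ℝ := hexp.isExtreme.extremePoints_subset_extremePoints hvF
    refine ⟨v, hvZ, ?_⟩
    have hvmem : v ∈ zsum a b := hFsub (extremePoints_subset hvF)
    have h2c : (2:ℝ) • c - v ∈ zsum a b := zsym hvmem
    have h2p : (2:ℝ) • p - v ∈ zsum a b := hFsub hvrec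
    have hμ1 : l0⁻¹ ≤ 1 := inv_le_one_of_one_le₀ hl01
    have hμ0 : (0:ℝ) ≤ l0⁻¹ := inv_nonneg.2 hl0nn
    have hcomb := convex_zsum a b h2c h2p (by linarith : (0:ℝ) ≤ 1 - l0⁻¹) hμ0 (by ring)
    have hzz : z = c + l0⁻¹ • (p - c) := by
      rw [hpdef, add_sub_cancel_left, smul_smul, inv_mul_cancel₀ (ne_of_gt hl0pos), one_smul]
      abel
    have hkeyeq : (2:ℝ) • z - v
        = (1 - l0⁻¹) • ((2:ℝ) • c - v) + l0⁻¹ • ((2:ℝ) • p - v) := by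
      rw [hzz]
      module
    rw [hkeyeq]
    exact hcomb

end

end ZonoProof

theorem stmt_7 {n : ℕ} (Z : Set (EuclideanSpace ℝ (Fin n))) (hZ : IsZonotope Z) :
    Z + Z.extremePoints ℝ = (2 : ℝ) • Z := by
  obtain ⟨m, a, b, rfl⟩ := hZ
  have hzs : (∑ i, segment ℝ (a i) (b i)) = ZonoProof.zsum a b := rfl
  rw [hzs]
  apply Set.Subset.antisymm
  · rintro x hx
    rw [Set.mem_add] at hx
    obtain ⟨y, hy, v, hv, rfl⟩ := hx
    refine Set.mem_smul_set.2 ⟨(2:ℝ)⁻¹ • (y + v), ?_, ?_⟩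
    · have hvZ : v ∈ ZonoProof.zsum a b := extremePoints_subset hv
      have hmid := (ZonoProof.convex_zsum a b) hy hvZ
        (by norm_num : (0:ℝ) ≤ 2⁻¹) (by norm_num : (0:ℝ) ≤ 2⁻¹) (by norm_num)
      have : (2:ℝ)⁻¹ • (y + v) = (2:ℝ)⁻¹ • y + (2:ℝ)⁻¹ • v := by module
      rw [this]
      exact hmid
    · rw [smul_smul]
      norm_num
  · rintro x hx
    obtain ⟨z, hz, rfl⟩ := Set.mem_smul_set.1 hx
    have htop : Module.finrank ℝ (⊤ : Submodule ℝ (EuclideanSpace ℝ (Fin n))) ≤ n := by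
      rw [finrank_top, finrank_euclideanSpace_fin]
    obtain ⟨v, hv, hw⟩ := ZonoProof.key n ⊤ htop m a b (fun i => Submodule.mem_top) z hz
    exact Set.mem_add.2 ⟨(2:ℝ) • z - v, hw, v, hv, by abel⟩
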